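/- Let 2 ≤ k ≤ n and let b > 0, B ≥ 0. There exists a constant c > 0, depending only on n, k, b, B, such that for every λ ∈ Γ_{k−1} and all real numbers β_0,…,β_{k−2} with β_l ≥ b for every l, if |f(λ)| ≤ B then σ_{k−1}(λ) ≥ c. -/

import Mathlib

open Finset

/-- The `k`-th elementary symmetric function of `lam : Fin n → ℝ`. -/
noncomputable def esymm (n k : ℕ) (lam : Fin n → ℝ) : ℝ :=
  ∑ s ∈ Finset.powersetCard k (Finset.univ : Finset (Fin n)), ∏ i ∈ s, lam i

/-- The Gårding cone `Γ_k ⊆ ℝ^n`. -/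
def GammaCone (n k : ℕ) : Set (Fin n → ℝ) :=
  {lam | ∀ i : ℕ, 1 ≤ i → i ≤ k → 0 < esymm n i lam}

/-- The mixed Hessian operator
`f(λ) = σ_k(λ)/σ_{k-1}(λ) - ∑_{l=0}^{k-2} β_l σ_l(λ)/σ_{k-1}(λ)`. -/
noncomputable def fmix (n k : ℕ) (β : ℕ → ℝ) (lam : Fin n → ℝ) : ℝ :=
  esymm n k lam / esymm n (k-1) lam
    - ∑ l ∈ Finset.range (k-1), β l * (esymm n l lam / esymm n (k-1) lam)


theorem mesymm_zero (s : Multiset ℝ) : s.esymm 0 = 1 := by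
  simp [Multiset.esymm, Multiset.powersetCard_zero_left]

theorem mesymm_eq_zero (s : Multiset ℝ) {j : ℕ} (hj : Multiset.card s < j) : s.esymm j = 0 := by
  simp [Multiset.esymm, Multiset.powersetCard_eq_empty _ hj]

open Polynomial Multiset in
theorem esymm_card_eq_prod (s : Multiset ℝ) : s.esymm (Multiset.card s) = s.prod := by
  have h : s.powersetCard (Multiset.card s) = {s} := by
    have hc : Multiset.card (s.powersetCard (Multiset.card s)) = 1 := by
      simp [Multiset.card_powersetCard]
    obtain ⟨t, ht⟩ := Multiset.card_eq_one.mp hc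
    have hmem : t ∈ s.powersetCard (Multiset.card s) := by simp [ht]
    rw [Multiset.mem_powersetCard] at hmem
    rw [ht, Multiset.eq_of_le_of_card_le hmem.1 (le_of_eq hmem.2.symm)]
  simp [Multiset.esymm, h]

open Multiset in
theorem esymm_cons (a : ℝ) (s : Multiset ℝ) (j : ℕ) :
    (a ::ₘ s).esymm (j+1) = s.esymm (j+1) + a * s.esymm j := by
  rw [Multiset.esymm, Multiset.powersetCard_cons, Multiset.map_add, Multiset.sum_add,
    Multiset.map_map]
  congr 1
  rw [Multiset.esymm, ← Multiset.sum_map_mul_left]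
  congr 1
  apply Multiset.map_congr rfl
  intro t ht
  simp [Multiset.prod_cons]

open Polynomial in
theorem deriv_step (s : Multiset ℝ) (hs : 0 < Multiset.card s) :
    ∃ t : Multiset ℝ, Multiset.card t = Multiset.card s - 1 ∧
      ∀ j ≤ Multiset.card s - 1,
        ((Multiset.card s - j : ℕ) : ℝ) * s.esymm j
          = (Multiset.card s : ℝ) * t.esymm j := by
  set c := Multiset.card s with hc
  set P : ℝ[X] := (s.map fun r => X + C r).prod with hP
  have hmonic : P.Monic :=
    monic_multiset_prod_of_monic s (fun r => X + C r) (fun r _ => monic_X_add_C r)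
  have hdeg : P.natDegree = c := by
    rw [hP, natDegree_multiset_prod_of_monic]
    · simp [Multiset.map_map, Function.comp_def, hc]
    · intro p hp
      obtain ⟨r, _, rfl⟩ := Multiset.mem_map.mp hp
      exact monic_X_add_C r
      
  have hPeq : P = ((s.map Neg.neg).map fun a => X - C a).prod := by
    rw [hP, Multiset.map_map]
    congr 1
    apply Multiset.map_congr rfl
    intro r _
    simp [sub_eq_add_neg]
  have hProots : P.roots = s.map Neg.neg := by
    rw [hPeq]
    exact roots_multiset_prod_X_sub_C _
  have hProotsCard : Multiset.card P.roots = c := by rw [hProots]; simp [hc]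
  set Q := derivative P with hQ
  have hQdeg : Q.natDegree = c - 1 ∧ Multiset.card Q.roots = c - 1 := by
    have h1 : c ≤ Multiset.card Q.roots + 1 := by
      rw [← hProotsCard]; exact card_roots_le_derivative P
    have h2 : Multiset.card Q.roots ≤ Q.natDegree := card_roots' Q
    have h3 : Q.natDegree ≤ c - 1 := hdeg ▸ natDegree_derivative_le P
    omega
  have hsplits : Q.Splits := splits_iff_card_roots.mpr (hQdeg.2.trans hQdeg.1.symm)
  have hlead : Q.leadingCoeff = (c : ℝ) := by
    rw [Polynomial.leadingCoeff, hQdeg.1, hQ, coeff_derivative]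
    have : c - 1 + 1 = c := by omega
    rw [this]
    have h4 : P.coeff c = 1 := by rw [← hdeg]; exact hmonic.coeff_natDegree
    rw [h4, one_mul]
    norm_cast
  refine ⟨Q.roots.map Neg.neg, by simp [hQdeg.2], ?_⟩
  intro j hj
  have hQeq : Q = C (c : ℝ) * ((Q.roots.map Neg.neg).map fun r => X + C r).prod := by
    rw [Multiset.map_map]
    have : ((fun r => X + C r) ∘ Neg.neg : ℝ → ℝ[X]) = fun a => X - C a := by
      funext a; simp [sub_eq_add_neg]
    rw [this, ← hlead]
    exact hsplits.eq_prod_roots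
  have key : Q.coeff (c - 1 - j) = P.coeff (c - j) * ((c - j : ℕ) : ℝ) := by
    rw [hQ, coeff_derivative]
    have : c - 1 - j + 1 = c - j := by omega
    rw [this]
    congr 1
    norm_cast
  have hPcoeff : P.coeff (c - j) = s.esymm j := by
    have h1 : c - j ≤ Multiset.card s := by omega
    have := Multiset.prod_X_add_C_coeff s h1
    rw [← hP, ← hc] at this
    rw [this]
    congr 1
    omega
  have hQcoeff : Q.coeff (c - 1 - j) = (c : ℝ) * (Q.roots.map Neg.neg).esymm j := by
    conv_lhs => rw [hQeq]
    rw [coeff_C_mul]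
    congr 1
    have h1 : c - 1 - j ≤ Multiset.card (Q.roots.map Neg.neg) := by
      simp only [Multiset.card_map, hQdeg.2]; omega
    have := Multiset.prod_X_add_C_coeff (Q.roots.map Neg.neg) h1
    rw [this]
    congr 1
    simp only [Multiset.card_map, hQdeg.2]
    omega
  rw [← hPcoeff, mul_comm, ← key, hQcoeff]

theorem inv_step (s : Multiset ℝ) (h : ∀ x ∈ s, x ≠ 0) :
    ∀ j ≤ Multiset.card s,
      s.prod * (s.map Inv.inv).esymm j = s.esymm (Multiset.card s - j) := by
  induction s using Multiset.induction_on with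
  | empty =>
    intro j hj
    simp only [Multiset.card_zero, Nat.le_zero] at hj
    subst hj
    simp [mesymm_zero]
  | cons a s ih =>
    intro j hj
    have ha : a ≠ 0 := h a (Multiset.mem_cons_self a s)
    have hs : ∀ x ∈ s, x ≠ 0 := fun x hx => h x (Multiset.mem_cons_of_mem hx)
    set c' := Multiset.card s with hc'
    have hcard : Multiset.card (a ::ₘ s) = c' + 1 := by simp [hc']
    match j with
    | 0 =>
      simp only [mesymm_zero, mul_one, Nat.sub_zero, hcard]
      rw [← esymm_card_eq_prod (a ::ₘ s), hcard]
    | (j' + 1) =>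
      rw [hcard] at hj ⊢
      have hj' : j' ≤ c' := by omega
      rw [Multiset.map_cons, esymm_cons, Multiset.prod_cons]
      have expand : a * s.prod * ((s.map Inv.inv).esymm (j' + 1) + a⁻¹ * (s.map Inv.inv).esymm j')
          = a * (s.prod * (s.map Inv.inv).esymm (j' + 1))
            + (a * a⁻¹) * (s.prod * (s.map Inv.inv).esymm j') := by ring
      rw [expand, mul_inv_cancel₀ ha, one_mul, ih hs j' hj']
      rcases Nat.lt_or_ge j' c' with hcase | hcase
      · rw [ih hs (j' + 1) (by omega)]
        have h1 : c' + 1 - (j' + 1) = (c' - (j' + 1)) + 1 := by omega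
        rw [h1, esymm_cons]
        have h2 : c' - (j' + 1) + 1 = c' - j' := by omega
        rw [h2]
        ring
      · have hjc : j' = c' := by omega
        have hzero : (Multiset.map Inv.inv s).esymm (j' + 1) = 0 :=
          mesymm_eq_zero _ (by simp only [Multiset.card_map, ← hc']; omega)
        rw [hzero, hjc]
        simp [mesymm_zero]

theorem newton_esymm (c : ℕ) (hc : 2 ≤ c) : ∀ s : Multiset ℝ, Multiset.card s = c →
    ∀ j : ℕ, 1 ≤ j → j + 1 ≤ c →
      s.esymm (j-1) * s.esymm (j+1) * (c.choose j : ℝ)^2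
        ≤ (s.esymm j)^2 * ((c.choose (j-1) : ℝ) * (c.choose (j+1) : ℝ)) := by
  induction c, hc using Nat.le_induction with
  | base =>
    intro s hs j hj1 hj2
    have hj : j = 1 := by omega
    subst hj
    obtain ⟨a, b, rfl⟩ := Multiset.card_eq_two.mp hs
    have hab : ({a, b} : Multiset ℝ) = a ::ₘ ({b} : Multiset ℝ) := rfl
    have e0 : ({a, b} : Multiset ℝ).esymm 0 = 1 := mesymm_zero _
    have e2 : ({a, b} : Multiset ℝ).esymm 2 = a * b := by
      have := esymm_card_eq_prod ({a, b} : Multiset ℝ)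
      rw [hs] at this
      rw [this]
      simp
    have e1 : ({a, b} : Multiset ℝ).esymm 1 = a + b := by
      rw [hab, show (1:ℕ) = 0 + 1 from rfl, esymm_cons, mesymm_zero]
      have hb1 : ({b} : Multiset ℝ).esymm 1 = b := by
        have := esymm_card_eq_prod ({b} : Multiset ℝ)
        simpa using this
      rw [hb1]; ring
    rw [e0, e1, e2]
    norm_num [Nat.choose]
    nlinarith [sq_nonneg (a - b)]
  | succ c hc2 IH =>
    have A : ∀ s : Multiset ℝ, Multiset.card s = c + 1 → ∀ j : ℕ, 1 ≤ j → j + 1 < c + 1 →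
        s.esymm (j-1) * s.esymm (j+1) * (((c+1).choose j : ℝ))^2
          ≤ (s.esymm j)^2 * (((c+1).choose (j-1) : ℝ) * ((c+1).choose (j+1) : ℝ)) := by
      intro s hs j hj1 hj2
      obtain ⟨t, htc, hR⟩ := deriv_step s (by rw [hs]; omega)
      rw [hs] at htc hR
      have htc' : Multiset.card t = c := by omega
      have hIH := IH t htc' j hj1 (by omega)
      have R1 := hR (j-1) (by omega)
      have R2 := hR j (by omega)
      have R3 := hR (j+1) (by omega)
      have Iden : ∀ j' : ℕ, ((c+1-j' : ℕ) : ℝ) * ((c+1).choose j' : ℝ)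
          = ((c+1 : ℕ) : ℝ) * (c.choose j' : ℝ) := by
        intro j'
        have h := Nat.choose_mul_succ_eq c j'
        exact_mod_cast congrArg (Nat.cast (R := ℝ))
          (by rw [mul_comm ((c+1-j')) ((c+1).choose j'), ← h]; ring : 
            (c+1-j') * ((c+1).choose j') = (c+1) * c.choose j')
      have I1 := Iden (j-1)
      have I2 := Iden j
      have I3 := Iden (j+1)
      have ha1 : (0:ℝ) < ((c+1-(j-1) : ℕ) : ℝ) := by
        exact_mod_cast Nat.cast_pos.mpr (show 0 < c+1-(j-1) by omega)
      have ha2 : (0:ℝ) < ((c+1-(j+1) : ℕ) : ℝ) := by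
        exact_mod_cast Nat.cast_pos.mpr (show 0 < c+1-(j+1) by omega)
      have ha3 : (0:ℝ) < ((c+1-j : ℕ) : ℝ) := by
        exact_mod_cast Nat.cast_pos.mpr (show 0 < c+1-j by omega)
      refine le_of_mul_le_mul_right ?_
        (show (0:ℝ) < ((c+1-(j-1) : ℕ) : ℝ) * ((c+1-(j+1) : ℕ) : ℝ) * ((c+1-j : ℕ) : ℝ)^2 by
          positivity)
      calc s.esymm (j-1) * s.esymm (j+1) * (((c+1).choose j : ℝ))^2 *
              (((c+1-(j-1) : ℕ) : ℝ) * ((c+1-(j+1) : ℕ) : ℝ) * ((c+1-j : ℕ) : ℝ)^2)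
          = (((c+1-(j-1) : ℕ) : ℝ) * s.esymm (j-1)) * (((c+1-(j+1) : ℕ) : ℝ) * s.esymm (j+1))
              * (((c+1-j : ℕ) : ℝ) * ((c+1).choose j : ℝ))^2 := by ring
        _ = (((c+1 : ℕ) : ℝ) * t.esymm (j-1)) * (((c+1 : ℕ) : ℝ) * t.esymm (j+1))
              * (((c+1 : ℕ) : ℝ) * (c.choose j : ℝ))^2 := by rw [R1, R3, I2]
        _ = (t.esymm (j-1) * t.esymm (j+1) * (c.choose j : ℝ)^2) * ((c+1 : ℕ) : ℝ)^4 := by ring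
        _ ≤ ((t.esymm j)^2 * ((c.choose (j-1) : ℝ) * (c.choose (j+1) : ℝ))) * ((c+1 : ℕ) : ℝ)^4 := by
            apply mul_le_mul_of_nonneg_right hIH (by positivity)
        _ = (((c+1 : ℕ) : ℝ) * t.esymm j)^2 *
              ((((c+1 : ℕ) : ℝ) * (c.choose (j-1) : ℝ)) * (((c+1 : ℕ) : ℝ) * (c.choose (j+1) : ℝ))) := by
            ring
        _ = (((c+1-j : ℕ) : ℝ) * s.esymm j)^2 *
              ((((c+1-(j-1) : ℕ) : ℝ) * ((c+1).choose (j-1) : ℝ))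
                * (((c+1-(j+1) : ℕ) : ℝ) * ((c+1).choose (j+1) : ℝ))) := by
            rw [R2, I1, I3]
        _ = (s.esymm j)^2 * (((c+1).choose (j-1) : ℝ) * ((c+1).choose (j+1) : ℝ)) *
              (((c+1-(j-1) : ℕ) : ℝ) * ((c+1-(j+1) : ℕ) : ℝ) * ((c+1-j : ℕ) : ℝ)^2) := by ring
    intro s hs j hj1 hj2
    rcases Nat.lt_or_ge (j+1) (c+1) with hlt | hge
    · exact A s hs j hj1 hlt
    · have hje : j = c := by omega
      rw [hje]
      by_cases hz : (0:ℝ) ∈ s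
      · have hzero : s.esymm (c+1) = 0 := by
          rw [show c+1 = Multiset.card s from hs.symm, esymm_card_eq_prod,
            Multiset.prod_eq_zero hz]
        rw [hzero]
        have : s.esymm (c-1) * 0 * (((c+1).choose c : ℝ))^2 = 0 := by ring
        rw [this]
        positivity
      · have hnz : ∀ x ∈ s, x ≠ 0 := fun x hx hx0 => hz (hx0 ▸ hx)
        have hA := A (s.map Inv.inv) (by simp [hs]) 1 le_rfl (by omega)
        simp only [show (1:ℕ)-1 = 0 from rfl, show (1:ℕ)+1 = 2 from rfl] at hA
        have V := inv_step s hnz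
        have V0 : s.prod * (s.map Inv.inv).esymm 0 = s.esymm (c+1) := by
          have := V 0 (by omega)
          rwa [hs, Nat.sub_zero] at this
        have V1 : s.prod * (s.map Inv.inv).esymm 1 = s.esymm c := by
          have := V 1 (by rw [hs]; omega)
          rwa [hs, show c+1-1 = c by omega] at this
        have V2 : s.prod * (s.map Inv.inv).esymm 2 = s.esymm (c-1) := by
          have := V 2 (by rw [hs]; omega)
          rwa [hs, show c+1-2 = c-1 by omega] at this
        have hC1 : (c+1).choose c = (c+1).choose 1 := by
          have := Nat.choose_symm (show 1 ≤ c+1 by omega)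
          rwa [show c+1-1 = c by omega] at this
        have hC2 : (c+1).choose (c-1) = (c+1).choose 2 := by
          have := Nat.choose_symm (show 2 ≤ c+1 by omega)
          rwa [show c+1-2 = c-1 by omega] at this
        have hC3 : ((c+1).choose (c+1) : ℕ) = (c+1).choose 0 := by
          rw [Nat.choose_self, Nat.choose_zero_right]
        rw [hC1, hC2, hC3]
        have E1 : s.esymm (c-1) * s.esymm (c+1) * (((c+1).choose 1 : ℝ))^2
            = (s.map Inv.inv).esymm 0 * (s.map Inv.inv).esymm 2 * (((c+1).choose 1 : ℝ))^2
              * s.prod^2 := by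
          rw [← V2, ← V0]; ring
        have E2 : (s.esymm c)^2 * (((c+1).choose 2 : ℝ) * ((c+1).choose 0 : ℝ))
            = ((s.map Inv.inv).esymm 1)^2 * (((c+1).choose 0 : ℝ) * ((c+1).choose 2 : ℝ))
              * s.prod^2 := by
          rw [← V1]; ring
        rw [E1, E2]
        exact mul_le_mul_of_nonneg_right hA (sq_nonneg _)

theorem esymm_eq_multiset (n k : ℕ) (lam : Fin n → ℝ) :
    esymm n k lam = (Multiset.map lam Finset.univ.val).esymm k :=
  (Finset.esymm_map_val lam Finset.univ k).symm

theorem esymm_zero_tuple (n : ℕ) (lam : Fin n → ℝ) : esymm n 0 lam = 1 := by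
  simp [esymm]

theorem newton_tuple (n : ℕ) (lam : Fin n → ℝ) (j : ℕ) (hj1 : 1 ≤ j) (hj2 : j + 1 ≤ n) :
    esymm n (j-1) lam * esymm n (j+1) lam * (n.choose j : ℝ)^2
      ≤ (esymm n j lam)^2 * ((n.choose (j-1) : ℝ) * (n.choose (j+1) : ℝ)) := by
  have h := newton_esymm n (by omega) (Multiset.map lam Finset.univ.val) (by simp) j hj1 hj2
  rw [esymm_eq_multiset n (j-1), esymm_eq_multiset n (j+1), esymm_eq_multiset n j]
  exact h

theorem chain_bound (n k : ℕ) (hk2 : 2 ≤ k) (hkn : k ≤ n) :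
    ∃ D : ℝ, 0 < D ∧ ∀ lam ∈ GammaCone n (k-1),
      esymm n k lam ≤ D * (esymm n 1 lam * esymm n (k-1) lam) := by
  suffices H : ∀ j : ℕ, 1 ≤ j → j ≤ k → ∃ D : ℝ, 0 < D ∧ ∀ lam ∈ GammaCone n (k-1),
      esymm n j lam ≤ D * (esymm n 1 lam * esymm n (j-1) lam) by
    obtain ⟨D, hD, h⟩ := H k (by omega) le_rfl
    exact ⟨D, hD, h⟩
  intro j hj1
  induction j, hj1 using Nat.le_induction with
  | base =>
    intro _
    refine ⟨1, one_pos, fun lam _ => ?_⟩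
    rw [esymm_zero_tuple]
    ring_nf
    exact le_refl _
  | succ j hj1 IH =>
    intro hjk
    obtain ⟨D, hD, hIH⟩ := IH (by omega)
    refine ⟨D * (n.choose (j-1) : ℝ) * (n.choose (j+1) : ℝ), mul_pos (mul_pos hD (Nat.cast_pos.mpr (Nat.choose_pos (show j-1 ≤ n by omega))))
      (Nat.cast_pos.mpr (Nat.choose_pos (show j+1 ≤ n by omega))), ?_⟩
    intro lam hlam
    have hpos : ∀ l : ℕ, 1 ≤ l → l ≤ k - 1 → 0 < esymm n l lam := hlam
    have h1 : 0 < esymm n 1 lam := hpos 1 le_rfl (by omega)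
    have hjm : 0 < esymm n (j-1) lam := by
      rcases Nat.eq_zero_or_pos (j-1) with h | h
      · rw [h, esymm_zero_tuple]; exact one_pos
      · exact hpos (j-1) h (by omega)
    have hj0 : 0 < esymm n j lam := hpos j (by omega) (by omega)
    have hnew := newton_tuple n lam j (by omega) (by omega)
    have hIH' := hIH lam hlam
    have hCjm : (1:ℝ) ≤ (n.choose (j-1) : ℝ) := by
      exact_mod_cast Nat.one_le_iff_ne_zero.mpr (Nat.choose_pos (show j-1 ≤ n by omega)).ne'
    have hCjp : (1:ℝ) ≤ (n.choose (j+1) : ℝ) := by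
      exact_mod_cast Nat.one_le_iff_ne_zero.mpr (Nat.choose_pos (show j+1 ≤ n by omega)).ne'
    have hCj : (1:ℝ) ≤ (n.choose j : ℝ) := by
      exact_mod_cast Nat.one_le_iff_ne_zero.mpr (Nat.choose_pos (show j ≤ n by omega)).ne'
    have hmul : 0 < esymm n (j-1) lam * (n.choose j : ℝ)^2 := by positivity
    refine le_of_mul_le_mul_right ?_ hmul
    calc esymm n (j+1) lam * (esymm n (j-1) lam * (n.choose j : ℝ)^2)
        = esymm n (j-1) lam * esymm n (j+1) lam * (n.choose j : ℝ)^2 := by ring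
      _ ≤ (esymm n j lam)^2 * ((n.choose (j-1) : ℝ) * (n.choose (j+1) : ℝ)) := hnew
      _ ≤ (D * (esymm n 1 lam * esymm n (j-1) lam) * esymm n j lam)
            * ((n.choose (j-1) : ℝ) * (n.choose (j+1) : ℝ)) := by
          have h2 := mul_le_mul_of_nonneg_right (mul_le_mul_of_nonneg_right hIH' hj0.le)
            (show (0:ℝ) ≤ (n.choose (j-1):ℝ) * (n.choose (j+1):ℝ) by positivity)
          ring_nf at h2 ⊢
          linarith [h2]
      _ ≤ (D * (esymm n 1 lam * esymm n (j-1) lam) * esymm n j lam)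
            * ((n.choose (j-1) : ℝ) * (n.choose (j+1) : ℝ)) * (n.choose j : ℝ)^2 := by
          apply le_mul_of_one_le_right
          · have hc1 : (0:ℝ) ≤ (n.choose (j-1) : ℝ) * (n.choose (j+1) : ℝ) := by positivity
            have hc2 : (0:ℝ) ≤ D * (esymm n 1 lam * esymm n (j-1) lam) * esymm n j lam :=
              mul_nonneg (mul_nonneg hD.le (by positivity)) hj0.le
            exact mul_nonneg hc2 hc1
          · nlinarith [hCj]
      _ = D * (n.choose (j-1) : ℝ) * (n.choose (j+1) : ℝ) * (esymm n 1 lam * esymm n j lam)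
            * (esymm n (j-1) lam * (n.choose j : ℝ)^2) := by ring

/-- Uniform positive lower bound on `σ_{k-1}(λ)`, depending only on `n, k, b, B`,
whenever all `β_l ≥ b > 0` and `|f(λ)| ≤ B`. -/
theorem esymm_pred_lower_bound_of_fmix_bounded (n k : ℕ) (hk2 : 2 ≤ k) (hkn : k ≤ n)
    (b B : ℝ) (hb : 0 < b) (hB : 0 ≤ B) :
    ∃ c > 0, ∀ (β : ℕ → ℝ), (∀ l, l ≤ k - 2 → b ≤ β l) →
      ∀ lam ∈ GammaCone n (k-1), |fmix n k β lam| ≤ B →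
        c ≤ esymm n (k-1) lam := by
  obtain ⟨D, hD, hchain⟩ := chain_bound n k hk2 hkn
  have hden : (0:ℝ) < 2*D + B := by linarith
  refine ⟨min 1 (b / (2*D + B)), lt_min one_pos (div_pos hb hden), ?_⟩
  intro β hβ lam hlam hf
  have hpos : ∀ l : ℕ, 1 ≤ l → l ≤ k - 1 → 0 < esymm n l lam := hlam
  set s := esymm n (k-1) lam with hsdef
  have hs : 0 < s := hpos (k-1) (by omega) le_rfl
  -- derive the sum bound
  have hlow : -B ≤ fmix n k β lam := (abs_le.mp hf).1
  have h2 : ∑ l ∈ Finset.range (k-1), β l * (esymm n l lam / s)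
      ≤ esymm n k lam / s + B := by
    unfold fmix at hlow
    rw [← hsdef] at hlow
    linarith
  have h3 : ∑ l ∈ Finset.range (k-1), β l * esymm n l lam ≤ esymm n k lam + B * s := by
    have h4 := mul_le_mul_of_nonneg_right h2 hs.le
    rw [Finset.sum_mul, add_mul, div_mul_cancel₀ _ hs.ne'] at h4
    have e : ∀ l ∈ Finset.range (k-1),
        β l * (esymm n l lam / s) * s = β l * esymm n l lam := by
      intro l _; field_simp
    rw [Finset.sum_congr rfl e] at h4
    exact h4
  have hσnonneg : ∀ l ∈ Finset.range (k-1), 0 ≤ esymm n l lam := by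
    intro l hl
    rcases Nat.eq_zero_or_pos l with h | h
    · rw [h, esymm_zero_tuple]; exact zero_le_one
    · exact (hpos l h (by have := Finset.mem_range.mp hl; omega)).le
  have hterm : ∀ l ∈ Finset.range (k-1), b * esymm n l lam ≤ β l * esymm n l lam := by
    intro l hl
    have hl' := Finset.mem_range.mp hl
    exact mul_le_mul_of_nonneg_right (hβ l (by omega)) (hσnonneg l hl)
  set S := ∑ l ∈ Finset.range (k-1), esymm n l lam with hSdef
  have hbS : b * S ≤ esymm n k lam + B * s := by
    rw [hSdef, Finset.mul_sum]
    exact le_trans (Finset.sum_le_sum hterm) h3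
  have hS1 : 1 ≤ S := by
    have h0 : (0:ℕ) ∈ Finset.range (k-1) := Finset.mem_range.mpr (by omega)
    have := Finset.single_le_sum hσnonneg h0
    rwa [esymm_zero_tuple] at this
  have hσ1S : esymm n 1 lam ≤ S + s := by
    by_cases hk3 : 3 ≤ k
    · have h1 : (1:ℕ) ∈ Finset.range (k-1) := Finset.mem_range.mpr (by omega)
      have := Finset.single_le_sum hσnonneg h1
      linarith
    · have hkk : k = 2 := by omega
      have : k - 1 = 1 := by omega
      rw [hsdef, this]
      linarith
  have hch := hchain lam hlam
  rcases le_or_gt 1 s with hcase | hcase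
  · exact le_trans (min_le_left _ _) hcase
  · refine le_trans (min_le_right _ _) ?_
    rw [div_le_iff₀ hden]
    have m1 : esymm n k lam ≤ D * ((S + s) * s) :=
      le_trans hch (mul_le_mul_of_nonneg_left (mul_le_mul_of_nonneg_right hσ1S hs.le) hD.le)
    have m2 : b * S ≤ D * ((S + s) * s) + B * s := by linarith
    have p1 : D * (s * s) ≤ D * (S * s) :=
      mul_le_mul_of_nonneg_left
        (mul_le_mul_of_nonneg_right (le_trans hcase.le hS1) hs.le) hD.le
    have p2 : B * s * 1 ≤ B * s * S := mul_le_mul_of_nonneg_left hS1 (by positivity)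
    have m3 : b * S ≤ (s * (2*D + B)) * S := by nlinarith [m2, p1, p2]
    have hSpos : (0:ℝ) < S := by linarith
    exact le_of_mul_le_mul_right m3 hSpos
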